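/- Let 1 ≤ p < ∞ and let X_1, …, X_n, Y be Banach spaces with each X_k nonzero. If every continuous n-linear operator T : X_1 × ⋯ × X_n → Y is factorable strongly p-summing, then for every j = 1, …, n, every continuous linear operator u : X_j → Y is absolutely p-summing. -/

import Mathlib

open scoped BigOperators
open MeasureTheory

noncomputable section

section Defs

variable (𝕜 : Type*) [RCLike 𝕜]

section Multi

variable {n : ℕ} {X : Fin n → Type*} {Y : Type*}
  [∀ k, NormedAddCommGroup (X k)] [∀ k, NormedSpace 𝕜 (X k)]
  [NormedAddCommGroup Y] [NormedSpace 𝕜 Y]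

/-- `C` witnesses the defining inequality of factorable strongly `p`-summing
multilinear operators. -/
def FactStronglySummingBound (p : ℝ) (T : ContinuousMultilinearMap 𝕜 X Y) (C : ℝ) : Prop :=
  0 ≤ C ∧ ∀ (m₁ m₂ : ℕ) (x : Fin m₁ → Fin m₂ → (∀ k, X k)) (lam : Fin m₁ → Fin m₂ → 𝕜),
    (∑ j, ‖∑ i, lam j i • T (x j i)‖ ^ p) ^ (1 / p) ≤
      C * ⨆ φ : {φ : ContinuousMultilinearMap 𝕜 X 𝕜 // ‖φ‖ ≤ 1},
        (∑ j, ‖∑ i, lam j i • φ.1 (x j i)‖ ^ p) ^ (1 / p)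

/-- Factorable strongly `p`-summing continuous multilinear operators. -/
def FactStronglySumming (p : ℝ) (T : ContinuousMultilinearMap 𝕜 X Y) : Prop :=
  ∃ C, FactStronglySummingBound 𝕜 p T C

/-- The factorable strongly `p`-summing norm `‖T‖_{FSt,p}` (the least admissible constant). -/
def fstMultiNorm (p : ℝ) (T : ContinuousMultilinearMap 𝕜 X Y) : ℝ :=
  sInf {C | FactStronglySummingBound 𝕜 p T C}

/-- Strongly `p`-summing continuous multilinear operators (Dimant). -/
def StronglySumming (p : ℝ) (T : ContinuousMultilinearMap 𝕜 X Y) : Prop :=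
  ∃ C : ℝ, 0 ≤ C ∧ ∀ (m : ℕ) (x : Fin m → (∀ k, X k)),
    (∑ j, ‖T (x j)‖ ^ p) ^ (1 / p) ≤
      C * ⨆ φ : {φ : ContinuousMultilinearMap 𝕜 X 𝕜 // ‖φ‖ ≤ 1},
        (∑ j, ‖φ.1 (x j)‖ ^ p) ^ (1 / p)

/-- Factorable `p`-dominated continuous multilinear operators. -/
def FactorablePDominated (p : ℝ) (T : ContinuousMultilinearMap 𝕜 X Y) : Prop :=
  ∃ C : ℝ, 0 ≤ C ∧ ∀ (m₁ m₂ : ℕ) (x : Fin m₁ → Fin m₂ → (∀ k, X k))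
    (lam : Fin m₁ → Fin m₂ → 𝕜),
    (∑ j, ‖∑ i, lam j i • T (x j i)‖ ^ p) ^ (1 / p) ≤
      C * ⨆ φ : ∀ k, {f : X k →L[𝕜] 𝕜 // ‖f‖ ≤ 1},
        (∑ j, ‖∑ i, lam j i • ∏ k, (φ k).1 (x j i k)‖ ^ p) ^ (1 / p)

/-- `p`-semi-integral continuous multilinear operators. -/
def PSemiIntegral (p : ℝ) (T : ContinuousMultilinearMap 𝕜 X Y) : Prop :=
  ∃ C : ℝ, 0 ≤ C ∧ ∀ (m : ℕ) (x : Fin m → (∀ k, X k)),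
    (∑ j, ‖T (x j)‖ ^ p) ^ (1 / p) ≤
      C * ⨆ φ : ∀ k, {f : X k →L[𝕜] 𝕜 // ‖f‖ ≤ 1},
        (∑ j, ‖∏ k, (φ k).1 (x j k)‖ ^ p) ^ (1 / p)

end Multi

section Poly

variable {X Y : Type*} [NormedAddCommGroup X] [NormedSpace 𝕜 X]
  [NormedAddCommGroup Y] [NormedSpace 𝕜 Y]

/-- `P` is a continuous `m`-homogeneous polynomial: the diagonal of a continuous
`m`-linear map. -/
def IsHomogPoly (m : ℕ) (P : X → Y) : Prop :=
  ∃ T : ContinuousMultilinearMap 𝕜 (fun _ : Fin m => X) Y, ∀ x, P x = T (fun _ => x)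

/-- Sup norm of a (homogeneous polynomial) map on the closed unit ball. -/
def polyNorm (P : X → Y) : ℝ :=
  ⨆ x : {x : X // ‖x‖ ≤ 1}, ‖P x.1‖

/-- `C` witnesses the defining inequality of factorable strongly `p`-summing
`m`-homogeneous polynomials. -/
def FactStronglySummingPolyBound (m : ℕ) (p : ℝ) (P : X → Y) (C : ℝ) : Prop :=
  0 ≤ C ∧ ∀ (m₁ m₂ : ℕ) (x : Fin m₁ → Fin m₂ → X) (lam : Fin m₁ → Fin m₂ → 𝕜),
    (∑ j, ‖∑ i, lam j i • P (x j i)‖ ^ p) ^ (1 / p) ≤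
      C * ⨆ q : {q : X → 𝕜 // IsHomogPoly 𝕜 m q ∧ polyNorm q ≤ 1},
        (∑ j, ‖∑ i, lam j i • q.1 (x j i)‖ ^ p) ^ (1 / p)

/-- Factorable strongly `p`-summing `m`-homogeneous polynomials. -/
def FactStronglySummingPoly (m : ℕ) (p : ℝ) (P : X → Y) : Prop :=
  IsHomogPoly 𝕜 m P ∧ ∃ C, FactStronglySummingPolyBound 𝕜 m p P C

/-- The factorable strongly `p`-summing norm `‖P‖_{FSt,p}` of a polynomial. -/
def fstPolyNorm (m : ℕ) (p : ℝ) (P : X → Y) : ℝ :=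
  sInf {C | FactStronglySummingPolyBound 𝕜 m p P C}

/-- `C` witnesses the defining inequality of absolutely `p`-summing linear operators. -/
def AbsSummingBound (p : ℝ) (u : X →L[𝕜] Y) (C : ℝ) : Prop :=
  0 ≤ C ∧ ∀ (m : ℕ) (x : Fin m → X),
    (∑ j, ‖u (x j)‖ ^ p) ^ (1 / p) ≤
      C * ⨆ φ : {φ : X →L[𝕜] 𝕜 // ‖φ‖ ≤ 1}, (∑ j, ‖φ.1 (x j)‖ ^ p) ^ (1 / p)

/-- Absolutely `p`-summing continuous linear operators. -/
def AbsolutelySumming (p : ℝ) (u : X →L[𝕜] Y) : Prop :=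
  ∃ C, AbsSummingBound 𝕜 p u C

/-- The absolutely `p`-summing norm `π_p(u)` (the least admissible constant). -/
def piSummingNorm (p : ℝ) (u : X →L[𝕜] Y) : ℝ :=
  sInf {C | AbsSummingBound 𝕜 p u C}

end Poly

end Defs

end
/-- if every continuous `n`-linear operator `T : X 1 × ⋯ × X n → Y` is
factorable strongly `p`-summing (the `X k` being nonzero Banach spaces), then for every
`j` every continuous linear operator `u : X j → Y` is absolutely `p`-summing. -/
theorem linear_absSumming_of_factStronglySumming_coincidence
    {𝕜 : Type*} [RCLike 𝕜] {n : ℕ} {X : Fin n → Type*} {Y : Type*}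
    [∀ k, NormedAddCommGroup (X k)] [∀ k, NormedSpace 𝕜 (X k)] [∀ k, CompleteSpace (X k)]
    [∀ k, Nontrivial (X k)]
    [NormedAddCommGroup Y] [NormedSpace 𝕜 Y] [CompleteSpace Y]
    (p : ℝ) (hp : 1 ≤ p)
    (h : ∀ T : ContinuousMultilinearMap 𝕜 X Y, FactStronglySumming 𝕜 p T) :
    ∀ (j : Fin n) (u : X j →L[𝕜] Y), AbsolutelySumming 𝕜 p u := by
  classical
  intro j u
  have hp0 : (0:ℝ) < p := lt_of_lt_of_le one_pos hp
  -- choose unit vectors and norming functionals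
  have hsel : ∀ k, ∃ (a : X k) (g : X k →L[𝕜] 𝕜), ‖a‖ = 1 ∧ ‖g‖ ≤ 1 ∧ g a = 1 := by
    intro k
    obtain ⟨x, hx⟩ := exists_ne (0 : X k)
    have hx0 : ‖x‖ ≠ 0 := norm_ne_zero_iff.2 hx
    set a : X k := (‖x‖ : 𝕜)⁻¹ • x with ha
    have hna : ‖a‖ = 1 := by
      rw [ha, norm_smul, norm_inv, RCLike.norm_ofReal, abs_of_nonneg (norm_nonneg x),
        inv_mul_cancel₀ hx0]
    have ha0 : a ≠ 0 := by
      intro h0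
      rw [h0, norm_zero] at hna
      exact one_ne_zero hna.symm
    obtain ⟨g, hg1, hga⟩ := exists_dual_vector 𝕜 a (norm_ne_zero_iff.2 ha0)
    exact ⟨a, g, hna, le_of_eq hg1, by rw [hga, hna]; norm_num⟩
  choose a g hna hng hga using hsel
  -- the scalar multilinear functional Φ m = ∏ k, g k (m k)
  let Φ : ContinuousMultilinearMap 𝕜 X 𝕜 :=
    (ContinuousMultilinearMap.mkPiAlgebra 𝕜 (Fin n) 𝕜).compContinuousLinearMap g
  have hΦ : ∀ m : ∀ k, X k, Φ m = ∏ k, g k (m k) := by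
    intro m; simp [Φ]
  have hΦa : Φ a = 1 := by
    rw [hΦ]
    simp [hga]
  -- the auxiliary multilinear operator T x = Φ (update x j (a j)) • u (x j)
  let Tmul : MultilinearMap 𝕜 X Y :=
  { toFun := fun x => Φ (Function.update x j (a j)) • u (x j)
    map_update_add' := by
      intro inst m i x y
      obtain rfl : inst = instDecidableEqFin n := Subsingleton.elim _ _
      rcases eq_or_ne i j with rfl | hij
      · simp only [Function.update_idem, Function.update_self, map_add, smul_add]
      · rw [Function.update_comm hij, Function.update_comm hij, Function.update_comm hij,
          Φ.map_update_add]
        simp [Function.update_of_ne hij.symm, add_smul]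
    map_update_smul' := by
      intro inst m i c x
      obtain rfl : inst = instDecidableEqFin n := Subsingleton.elim _ _
      rcases eq_or_ne i j with rfl | hij
      · rw [Function.update_idem, Function.update_idem, Function.update_self,
          Function.update_self, u.map_smul, smul_comm]
      · rw [Function.update_comm hij, Function.update_comm hij, Φ.map_update_smul,
          Function.update_of_ne hij.symm, Function.update_of_ne hij.symm, smul_assoc] }
  -- product of norms of an updated family
  have hprod : ∀ (v : X j) (x : ∀ k, X k),
      ∏ k, ‖Function.update x j v k‖ = ‖v‖ * ∏ k ∈ Finset.univ.erase j, ‖x k‖ := by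
    intro v x
    have : ∀ k, ‖Function.update x j v k‖ = Function.update (fun k => ‖x k‖) j ‖v‖ k := by
      intro k
      rcases eq_or_ne k j with rfl | hk
      · simp
      · simp [Function.update_of_ne hk]
    rw [Finset.prod_congr rfl (fun k _ => this k),
      Finset.prod_update_of_mem (Finset.mem_univ j), Finset.erase_eq]
  have hTmulapp : ∀ x : ∀ k, X k, Tmul x = Φ (Function.update x j (a j)) • u (x j) :=
    fun x => rfl
  have hTbound : ∀ x : ∀ k, X k, ‖Tmul x‖ ≤ (‖Φ‖ * ‖u‖) * ∏ k, ‖x k‖ := by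
    intro x
    rw [hTmulapp]
    have h1 : ‖Φ (Function.update x j (a j))‖ ≤ ‖Φ‖ * ∏ k ∈ Finset.univ.erase j, ‖x k‖ := by
      have := Φ.le_opNorm (Function.update x j (a j))
      rwa [hprod (a j) x, hna, one_mul] at this
    have h2 : ‖u (x j)‖ ≤ ‖u‖ * ‖x j‖ := u.le_opNorm (x j)
    have hfull : ∏ k, ‖x k‖ = ‖x j‖ * ∏ k ∈ Finset.univ.erase j, ‖x k‖ :=
      (Finset.mul_prod_erase _ _ (Finset.mem_univ j)).symm
    calc ‖Φ (Function.update x j (a j)) • u (x j)‖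
        = ‖Φ (Function.update x j (a j))‖ * ‖u (x j)‖ := norm_smul _ _
      _ ≤ (‖Φ‖ * ∏ k ∈ Finset.univ.erase j, ‖x k‖) * (‖u‖ * ‖x j‖) := by
          apply mul_le_mul h1 h2 (norm_nonneg _)
          positivity
      _ = (‖Φ‖ * ‖u‖) * ∏ k, ‖x k‖ := by rw [hfull]; ring
  let T : ContinuousMultilinearMap 𝕜 X Y := Tmul.mkContinuous _ hTbound
  have hTapp : ∀ x : ∀ k, X k, T x = Φ (Function.update x j (a j)) • u (x j) := by
    intro x
    rw [show T x = Tmul x from rfl, hTmulapp]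
  have hT : ∀ v : X j, T (Function.update a j v) = u v := by
    intro v
    rw [hTapp]
    show Φ (Function.update (Function.update a j v) j (a j)) •
      u (Function.update a j v j) = u v
    rw [Function.update_idem, Function.update_eq_self, hΦa, Function.update_self, one_smul]
  obtain ⟨C, hC0, hC⟩ := h T
  refine ⟨C, hC0, ?_⟩
  intro m x
  -- the witness for absolute summability
  have key := hC m 1 (fun j' _ => Function.update a j (x j')) (fun _ _ => (1:𝕜))
  have hL : ∀ j' : Fin m, (∑ i : Fin 1, (1:𝕜) • T (Function.update a j (x j'))) = u (x j') := by
    intro j'; simp [hT]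
  rw [Finset.sum_congr rfl (fun j' _ => by rw [hL j'])] at key
  refine key.trans ?_
  apply mul_le_mul_of_nonneg_left ?_ hC0
  -- compare the two suprema
  set G : {φ : X j →L[𝕜] 𝕜 // ‖φ‖ ≤ 1} → ℝ :=
    fun ψ => (∑ j', ‖ψ.1 (x j')‖ ^ p) ^ (1/p) with hG
  have hGbdd : BddAbove (Set.range G) := by
    refine ⟨(∑ j', ‖x j'‖ ^ p) ^ (1/p), ?_⟩
    rintro _ ⟨ψ, rfl⟩
    apply Real.rpow_le_rpow (by positivity) ?_ (by positivity)
    apply Finset.sum_le_sum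
    intro j' _
    apply Real.rpow_le_rpow (norm_nonneg _) ?_ (le_of_lt hp0)
    calc ‖ψ.1 (x j')‖ ≤ ‖ψ.1‖ * ‖x j'‖ := ψ.1.le_opNorm _
      _ ≤ 1 * ‖x j'‖ := by
          apply mul_le_mul_of_nonneg_right ψ.2 (norm_nonneg _)
      _ = ‖x j'‖ := one_mul _
  haveI : Nonempty {φ : ContinuousMultilinearMap 𝕜 X 𝕜 // ‖φ‖ ≤ 1} :=
    ⟨⟨0, by simp⟩⟩
  apply ciSup_le
  intro φ
  -- restrict φ to the j-th coordinate
  set ψ : X j →L[𝕜] 𝕜 := φ.1.toContinuousLinearMap a j with hψ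
  have hψnorm : ‖ψ‖ ≤ 1 := by
    apply ContinuousLinearMap.opNorm_le_bound _ zero_le_one
    intro v
    have h1 : ‖φ.1 (Function.update a j v)‖ ≤ ‖φ.1‖ * ∏ k, ‖Function.update a j v k‖ :=
      φ.1.le_opNorm _
    rw [hprod v a] at h1
    have h2 : ∏ k ∈ Finset.univ.erase j, ‖a k‖ = 1 := by
      apply Finset.prod_eq_one; intro k _; exact hna k
    rw [h2, mul_one] at h1
    calc ‖ψ v‖ = ‖φ.1 (Function.update a j v)‖ := rfl
      _ ≤ ‖φ.1‖ * ‖v‖ := h1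
      _ ≤ 1 * ‖v‖ := mul_le_mul_of_nonneg_right φ.2 (norm_nonneg _)
  refine le_trans (le_of_eq ?_) (le_ciSup hGbdd ⟨ψ, hψnorm⟩)
  rw [hG]
  congr 1
  apply Finset.sum_congr rfl
  intro j' _
  congr 2
  simp [hψ]
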